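/- Let w ∈ αΣ* ∩ Σ*‾α be a non-α-crossing (m,n)-word with m, n ≥ 2, with α-prefixes u₀ <_p ⋯ <_p u_{m−1} and ‾α-suffixes ‾v₀, …, ‾v_{n−1} with ‾v_{n−1} >_s ⋯ >_s ‾v₀. If u₁ = v₁, then H*_α(w) ⊆ u₁αΣ* ∩ Σ*‾α‾u₁. -/

import Mathlib

open List

namespace Hairpin

variable {S : Type} [DecidableEq S]

/-- Antimorphic extension of an involution to words. -/
def comp (bar : S → S) (w : List S) : List S := (w.map bar).reverse

/-- Right hairpin completion w.r.t. primer `a`. -/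
def RH (bar : S → S) (a w z : List S) : Prop :=
  ∃ γ β : List S, w = γ ++ a ++ β ++ comp bar a ∧ z = w ++ comp bar γ

/-- Left hairpin completion w.r.t. primer `a`. -/
def LH (bar : S → S) (a w z : List S) : Prop :=
  ∃ γ β : List S, w = a ++ β ++ comp bar a ++ comp bar γ ∧ z = γ ++ w

/-- One hairpin completion step. -/
def HC (bar : S → S) (a w z : List S) : Prop := RH bar a w z ∨ LH bar a w z

/-- Iterated hairpin completion `H*_α(w)`. -/
def HCstar (bar : S → S) (a w : List S) : Set (List S) :=
  { z | Relation.ReflTransGen (HC bar a) w z }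

/-- `w` is non-`a`-crossing: every occurrence of `a` starts no later than
every occurrence of `comp bar a`. -/
def NonCrossing (bar : S → S) (a w : List S) : Prop :=
  ∀ i j : ℕ, a <+: w.drop i → comp bar a <+: w.drop j → i ≤ j

/-- The set of `a`-prefixes of `w`. -/
def Pa (a w : List S) : Set (List S) := { u | u ++ a <+: w }

/-- The set of `‾a`-suffixes of `w` (the elements are the words `‾v`). -/
def Sa (bar : S → S) (a w : List S) : Set (List S) :=
  { x | comp bar a ++ x <:+ w }

/-- The set of complements of `‾a`-suffixes of `w`, i.e. `‾(S_‾α(w))`. -/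
def barSa (bar : S → S) (a w : List S) : Set (List S) :=
  { v | comp bar a ++ comp bar v <:+ w }

/-- Kleene star of a set of words: all finite concatenations. -/
def star (X : Set (List S)) : Set (List S) :=
  { x | ∃ l : List (List S), (∀ y ∈ l, y ∈ X) ∧ x = l.flatten }

/-- `ind_α(x)`: the number of occurrences of `a` in `x ++ a` other than the
suffix occurrence, i.e. the number of positions `i < |x|` where `a` occurs. -/
def inda (a x : List S) : ℕ :=
  ((Finset.range x.length).filter (fun i => a <+: (x ++ a).drop i)).card

section Aux

variable (bar : S → S)

lemma comp_append (x y : List S) : comp bar (x ++ y) = comp bar y ++ comp bar x := by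
  simp [comp]

@[simp] lemma comp_nil : comp bar ([] : List S) = [] := rfl

@[simp] lemma comp_length (x : List S) : (comp bar x).length = x.length := by simp [comp]

lemma comp_comp (hbar : Function.Involutive bar) (x : List S) :
    comp bar (comp bar x) = x := by
  simp [comp, List.map_map, hbar.comp_self]

lemma comp_prefix {x y : List S} (h : x <+: y) : comp bar x <:+ comp bar y := by
  obtain ⟨t, rfl⟩ := h
  rw [comp_append]
  exact suffix_append _ _

lemma comp_suffix {x y : List S} (h : x <:+ y) : comp bar x <+: comp bar y := by
  obtain ⟨t, rfl⟩ := h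
  rw [comp_append]
  exact prefix_append _ _

lemma suffix_of_suffix_le {x y z : List S} (h1 : x <:+ z) (h2 : y <:+ z)
    (h : x.length ≤ y.length) : x <:+ y := by
  have := prefix_of_prefix_length_le (reverse_prefix.mpr h1) (reverse_prefix.mpr h2)
    (by simpa using h)
  exact reverse_prefix.mp this

lemma suffix_eq_of_length {x y z : List S} (h1 : x <:+ z) (h2 : y <:+ z)
    (h : x.length = y.length) : x = y := by
  obtain ⟨e, rfl⟩ := suffix_of_suffix_le h1 h2 h.le
  simp only [length_append] at h
  have he : e = [] := by
    apply List.eq_nil_of_length_eq_zero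
    omega
  subst he
  simp

lemma suffix_append_right {x y : List S} (h : x <:+ y) (c : List S) :
    x ++ c <:+ y ++ c := by
  obtain ⟨e, rfl⟩ := h
  exact ⟨e, (append_assoc _ _ _).symm⟩

lemma prefix_append_left_iff (c : List S) {x y : List S} : c ++ x <+: c ++ y ↔ x <+: y := by
  constructor
  · rintro ⟨t, ht⟩
    rw [append_assoc] at ht
    exact ⟨t, append_cancel_left ht⟩
  · rintro ⟨t, rfl⟩
    exact ⟨t, by rw [append_assoc]⟩

lemma overlap_facts {a c : List S} (h : a <+: c ++ a) (hc : c.length ≤ a.length) :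
    c = a.take c.length ∧ a.drop c.length = a.take (a.length - c.length) := by
  have ha : a = (c ++ a).take a.length := prefix_iff_eq_take.mp h
  rw [take_append, take_of_length_le hc] at ha
  constructor
  · calc c = (c ++ a.take (a.length - c.length)).take c.length := by
            simp [take_append]
      _ = a.take c.length := by rw [← ha]
  · calc a.drop c.length = (c ++ a.take (a.length - c.length)).drop c.length := by
            conv_lhs => rw [ha]
      _ = a.take (a.length - c.length) := by rw [drop_left]

/-- The invariant propagated along hairpin completions. -/
def Inv (bar : S → S) (a u1 z : List S) : Prop :=
  a <+: z ∧ (u1 ++ a) <+: z ∧ comp bar a <:+ z ∧ comp bar (u1 ++ a) <:+ z ∧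
  (∀ g : List S, g ++ a <+: z → g = [] ∨ u1 <+: g) ∧
  (∀ d : List S, comp bar a ++ d <:+ z → d = [] ∨ comp bar u1 <:+ d)

lemma inv_comp (hbar : Function.Involutive bar) {a u1 z : List S}
    (h : Inv bar a u1 z) : Inv bar a u1 (comp bar z) := by
  obtain ⟨h1, h2, h3, h4, hA, hB⟩ := h
  refine ⟨?_, ?_, comp_prefix bar h1, comp_prefix bar h2, ?_, ?_⟩
  · have := comp_suffix bar h3
    rwa [comp_comp bar hbar] at this
  · have := comp_suffix bar h4
    rwa [comp_comp bar hbar] at this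
  · intro g hg
    have h5 := comp_prefix bar hg
    simp only [comp_append, comp_comp bar hbar] at h5
    rcases hB _ h5 with h6 | h6
    · left
      have := congrArg (comp bar) h6
      rwa [comp_comp bar hbar, comp_nil] at this
    · right
      have := comp_suffix bar h6
      simp only [comp_comp bar hbar] at this
      exact this
  · intro d hd
    have h5 := comp_suffix bar hd
    simp only [comp_append, comp_comp bar hbar] at h5
    rcases hA _ h5 with h6 | h6
    · left
      have := congrArg (comp bar) h6
      rwa [comp_comp bar hbar, comp_nil] at this
    · right
      have := comp_prefix bar h6
      simp only [comp_comp bar hbar] at this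
      exact this

lemma lh_to_rh (hbar : Function.Involutive bar) {a z z' : List S}
    (h : LH bar a z z') : RH bar a (comp bar z) (comp bar z') := by
  obtain ⟨γ, β, h1, h2⟩ := h
  refine ⟨γ, comp bar β, ?_, ?_⟩
  · rw [h1]
    simp only [comp_append, comp_comp bar hbar]
    simp [append_assoc]
  · rw [h2, comp_append]

lemma rh_inv (hbar : Function.Involutive bar) {a u1 z z' : List S}
    (hz : Inv bar a u1 z) (h : RH bar a z z') : Inv bar a u1 z' := by
  obtain ⟨γ, β, hzd, rfl⟩ := h
  obtain ⟨h1, h2, h3, h4, hA, hB⟩ := id hz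
  have hγa : γ ++ a <+: z := ⟨β ++ comp bar a, by rw [hzd]; simp [append_assoc]⟩
  rcases hA γ hγa with hγ | hγ
  · subst hγ
    rw [comp_nil, append_nil]
    exact hz
  · obtain ⟨r, rfl⟩ := hγ
    have hF1 : a <+: u1 ++ a := prefix_of_prefix_length_le h1 h2 (by simp)
    have hγz : (u1 ++ r) <+: z := (prefix_append _ _).trans hγa
    have hp_γa : u1 ++ a <+: (u1 ++ r) ++ a :=
      prefix_of_prefix_length_le h2 hγa (by simp)
    have hra : a <+: r ++ a := by
      rw [append_assoc] at hp_γa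
      exact (prefix_append_left_iff u1).mp hp_γa
    have c1 : a <+: z ++ comp bar (u1 ++ r) := h1.trans (prefix_append _ _)
    have c2 : u1 ++ a <+: z ++ comp bar (u1 ++ r) := h2.trans (prefix_append _ _)
    have c3 : comp bar a <:+ z ++ comp bar (u1 ++ r) := by
      rcases le_or_gt a.length (u1 ++ r).length with hAle | hAlt
      · have haγ : a <+: u1 ++ r := prefix_of_prefix_length_le h1 hγz hAle
        exact (comp_prefix bar haγ).trans (suffix_append _ _)
      · have hγov : a <+: (u1 ++ r) ++ a :=
          prefix_of_prefix_length_le h1 hγa (by simp only [length_append]; omega)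
        obtain ⟨hc1, hc2⟩ := overlap_facts hγov hAlt.le
        have hkey : a = (u1 ++ r) ++ a.take (a.length - (u1 ++ r).length) := by
          conv_lhs => rw [← take_append_drop (u1 ++ r).length a]
          rw [hc2, ← hc1]
        have hsfx : comp bar (a.take (a.length - (u1 ++ r).length)) <:+ z :=
          (comp_prefix bar (take_prefix _ _)).trans h3
        have h9 := suffix_append_right hsfx (comp bar (u1 ++ r))
        rwa [← comp_append, ← hkey] at h9
    have c4 : comp bar (u1 ++ a) <:+ z ++ comp bar (u1 ++ r) := by
      have hq1 : comp bar a <:+ comp bar (r ++ a) := comp_prefix bar hra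
      rw [comp_append] at hq1
      have h5 := suffix_append_right hq1 (comp bar u1)
      obtain ⟨e, he⟩ := h3
      have h6 : (comp bar a ++ comp bar r) ++ comp bar u1 <:+ z ++ comp bar (u1 ++ r) :=
        ⟨e, by rw [comp_append, ← he]; simp [append_assoc]⟩
      have h7 := h5.trans h6
      rwa [← comp_append] at h7
    refine ⟨c1, c2, c3, c4, ?_, ?_⟩
    · -- prefix condition A
      intro g hg
      by_cases hgl : g.length + a.length ≤ z.length
      · exact hA g (prefix_of_prefix_length_le hg (prefix_append _ _) (by simpa using hgl))
      · right
        have hu1 : u1 <+: z ++ comp bar (u1 ++ r) := (prefix_append _ _).trans c2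
        have hgz : g <+: z ++ comp bar (u1 ++ r) := (prefix_append _ _).trans hg
        refine prefix_of_prefix_length_le hu1 hgz ?_
        have := h2.length_le
        simp only [length_append] at this
        omega
    · -- suffix condition B
      intro d hd
      have hu1z : comp bar u1 <:+ z ++ comp bar (u1 ++ r) := by
        have : comp bar u1 <:+ comp bar (u1 ++ a) := by
          rw [comp_append]; exact suffix_append _ _
        exact this.trans c4
      have hdz : d <:+ z ++ comp bar (u1 ++ r) := (suffix_append _ _).trans hd
      by_cases hDU : u1.length ≤ d.length
      · exact Or.inr (suffix_of_suffix_le hu1z hdz (by simpa using hDU))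
      push_neg at hDU
      by_cases hD0 : d.length = 0
      · exact Or.inl (List.eq_nil_of_length_eq_zero hD0)
      by_cases hEasy : a.length + d.length ≤ u1.length + r.length
      · -- the occurrence lies inside comp γ
        have h6 : comp bar a ++ d <:+ comp bar (u1 ++ r) :=
          suffix_of_suffix_le hd (suffix_append _ _) (by simp; omega)
        have h7 := comp_suffix bar h6
        simp only [comp_append, comp_comp bar hbar] at h7
        have h8 : comp bar d ++ a <+: z := h7.trans hγz
        rcases hA _ h8 with h9 | h9
        · left
          have hc := congrArg (comp bar) h9
          rwa [comp_comp bar hbar, comp_nil] at hc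
        · exfalso
          have hl := h9.length_le
          simp only [comp_length] at hl
          omega
      · -- the hard case: the occurrence straddles the border
        exfalso
        push_neg at hEasy
        set σ : ℕ := a.length + d.length - (u1.length + r.length) with hσdef
        have hcγd : comp bar (u1 ++ r) <:+ comp bar a ++ d :=
          suffix_of_suffix_le (suffix_append _ _) hd (by simp; omega)
        obtain ⟨h₁, hh⟩ := hcγd
        have hh1len : h₁.length = σ := by
          have := congrArg List.length hh
          simp only [length_append, comp_length] at this
          omega
        have hh1z : h₁ <:+ z := by
          obtain ⟨e, he⟩ := hd
          rw [← hh, ← append_assoc] at he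
          exact ⟨e, append_cancel_right he⟩
        have hh1q : h₁ <:+ comp bar (u1 ++ a) := by
          refine suffix_of_suffix_le hh1z h4 ?_
          rw [hh1len]
          simp only [comp_length, length_append]
          omega
        have hps : comp bar ((u1 ++ a).take σ) <:+ comp bar (u1 ++ a) :=
          comp_prefix bar (take_prefix _ _)
        have hh1eq : h₁ = comp bar ((u1 ++ a).take σ) := by
          refine suffix_eq_of_length hh1q hps ?_
          simp only [hh1len, comp_length, length_take, length_append]
          omega
        have hkeyEq : comp bar d ++ a = (u1 ++ r) ++ (u1 ++ a).take σ := by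
          have hc := congrArg (comp bar) hh
          rw [hh1eq] at hc
          simp only [comp_append, comp_comp bar hbar] at hc
          exact hc.symm
        have hcdu : comp bar d <+: u1 := by
          have l1 : comp bar d <+: comp bar d ++ a := prefix_append _ _
          rw [hkeyEq] at l1
          have l2 : u1 <+: (u1 ++ r) ++ (u1 ++ a).take σ := by
            rw [append_assoc]; exact prefix_append _ _
          exact prefix_of_prefix_length_le l1 l2 (by simp; omega)
        have hkey2 : a = u1.drop d.length ++ (r ++ (u1 ++ a).take σ) := by
          have l1 : (comp bar d ++ a).drop d.length = a := by
            have := drop_left (l₁ := comp bar d) (l₂ := a)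
            simpa using this
          have l2 : ((u1 ++ r) ++ (u1 ++ a).take σ).drop d.length
              = u1.drop d.length ++ (r ++ (u1 ++ a).take σ) := by
            rw [append_assoc, drop_append,
              Nat.sub_eq_zero_of_le hDU.le, drop_zero]
          have e1 : (comp bar d ++ a).drop d.length
              = ((u1 ++ r) ++ (u1 ++ a).take σ).drop d.length := by rw [hkeyEq]
          rw [l1, l2] at e1
          exact e1
        have hRA2 : r.length ≤ a.length := by omega
        obtain ⟨hrtake, hrper⟩ := overlap_facts hra hRA2
        have hpa : a = (u1 ++ a).take a.length := prefix_iff_eq_take.mp hF1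
        have hpσ : (u1 ++ a).take σ = a.take σ := by
          conv_rhs => rw [hpa]
          rw [take_take, min_eq_left (by omega : σ ≤ a.length)]
        have htake : r ++ (u1 ++ a).take σ = a.take (r.length + σ) := by
          rw [take_add, ← hrtake, hrper, take_take,
            min_eq_left (by omega : σ ≤ a.length - r.length), hpσ]
        have hkey3 : a = u1.drop d.length ++ a.take (r.length + σ) :=
          hkey2.trans (by rw [htake])
        obtain ⟨mz, hmz⟩ := h2
        have hzdrop : z.drop d.length = u1.drop d.length ++ (a ++ mz) := by
          rw [← hmz, append_assoc, drop_append,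
            Nat.sub_eq_zero_of_le hDU.le, drop_zero]
        have haz2 : a <+: z.drop d.length := by
          rw [hkey3, hzdrop]
          exact (prefix_append_left_iff _).mpr ((take_prefix _ _).trans (prefix_append _ _))
        have hfinal : z.take d.length ++ a <+: z := by
          have := (prefix_append_left_iff (z.take d.length)).mpr haz2
          rwa [take_append_drop] at this
        rcases hA _ hfinal with hf | hf
        · rcases take_eq_nil_iff.mp hf with h' | h'
          · exact hD0 h'
          · rw [h'] at hmz
            have := congrArg List.length hmz
            simp only [length_append, length_nil] at this
            omega
        · have l1 := hf.length_le
          have l2 : (z.take d.length).length ≤ d.length := length_take_le _ _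
          omega

end Aux

theorem stmt16 (bar : S → S) (hbar : Function.Involutive bar)
    (a w : List S) (ha : a ≠ comp bar a)
    (hp : a <+: w) (hs : comp bar a <:+ w)
    (hnc : NonCrossing bar a w) (m : ℕ) (u : Fin m → List S)
    (huchain : ∀ i j : Fin m, i < j → u i <+: u j ∧ u i ≠ u j)
    (hPu : Pa a w = Set.range u)
    (n : ℕ) (v : Fin n → List S)
    (hvchain : ∀ i j : Fin n, i < j → comp bar (v i) <:+ comp bar (v j) ∧ v i ≠ v j)
    (hSv : Sa bar a w = Set.range (fun i => comp bar (v i)))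
    (hm : 2 ≤ m) (hn : 2 ≤ n)
    (huv : u ⟨1, by omega⟩ = v ⟨1, by omega⟩) :
    ∀ z ∈ HCstar bar a w,
      (u ⟨1, by omega⟩ ++ a) <+: z ∧ comp bar (u ⟨1, by omega⟩ ++ a) <:+ z := by
  intro z hz
  have hm1 : (1 : ℕ) < m := by omega
  have hn1 : (1 : ℕ) < n := by omega
  have hm0 : (0 : ℕ) < m := by omega
  have hn0 : (0 : ℕ) < n := by omega
  have huv1 : u ⟨1, hm1⟩ = v ⟨1, hn1⟩ := huv
  -- u 0 = []
  have hu0 : u ⟨0, hm0⟩ = [] := by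
    have h0 : ([] : List S) ∈ Pa a w := by
      show ([] : List S) ++ a <+: w
      simpa using hp
    rw [hPu] at h0
    obtain ⟨i, hi⟩ := h0
    rcases eq_or_ne i.val 0 with hcase | hcase
    · have : i = ⟨0, hm0⟩ := Fin.ext (by simpa using hcase)
      rw [← this]; exact hi
    · have hlt : (⟨0, hm0⟩ : Fin m) < i := by
        simp only [Fin.lt_def]
        omega
      obtain ⟨hpre, hne⟩ := huchain _ _ hlt
      rw [hi] at hpre
      have h0eq := prefix_nil.mp hpre
      exact absurd (h0eq.trans hi.symm) hne
  -- comp (v 0) = []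
  have hv0 : comp bar (v ⟨0, hn0⟩) = [] := by
    have h0 : ([] : List S) ∈ Sa bar a w := by
      show comp bar a ++ ([] : List S) <:+ w
      simpa using hs
    rw [hSv] at h0
    obtain ⟨i, hi⟩ := h0
    simp only at hi
    rcases eq_or_ne i.val 0 with hcase | hcase
    · have : i = ⟨0, hn0⟩ := Fin.ext (by simpa using hcase)
      rw [← this]; exact hi
    · have hlt : (⟨0, hn0⟩ : Fin n) < i := by
        simp only [Fin.lt_def]
        omega
      obtain ⟨hsuf, hne⟩ := hvchain _ _ hlt
      rw [hi] at hsuf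
      have h0eq := suffix_nil.mp hsuf
      have e0 : v ⟨0, hn0⟩ = v i := by
        have a0 := congrArg (comp bar) (h0eq.trans hi.symm)
        rwa [comp_comp bar hbar, comp_comp bar hbar] at a0
      exact absurd e0 hne
  -- the prefix condition for w
  have hAw : ∀ g : List S, g ++ a <+: w → g = [] ∨ u ⟨1, hm1⟩ <+: g := by
    intro g hg
    have hmem : g ∈ Pa a w := hg
    rw [hPu] at hmem
    obtain ⟨i, hi⟩ := hmem
    rcases lt_trichotomy i.val 1 with hcase | hcase | hcase
    · left
      have : i = ⟨0, hm0⟩ := Fin.ext (by simpa using (by omega : i.val = 0))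
      rw [← hi, this]
      exact hu0
    · right
      have : i = ⟨1, hm1⟩ := Fin.ext (by simpa using hcase)
      rw [← hi, this]
    · right
      have hlt : (⟨1, hm1⟩ : Fin m) < i := by
        simp only [Fin.lt_def]
        omega
      have := (huchain _ _ hlt).1
      rwa [hi] at this
  -- the suffix condition for w
  have hBw : ∀ d : List S, comp bar a ++ d <:+ w → d = [] ∨ comp bar (u ⟨1, hm1⟩) <:+ d := by
    intro d hd
    have hmem : d ∈ Sa bar a w := hd
    rw [hSv] at hmem
    obtain ⟨i, hi⟩ := hmem
    simp only at hi
    rcases lt_trichotomy i.val 1 with hcase | hcase | hcase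
    · left
      have : i = ⟨0, hn0⟩ := Fin.ext (by simpa using (by omega : i.val = 0))
      rw [← hi, this]
      exact hv0
    · right
      have : i = ⟨1, hn1⟩ := Fin.ext (by simpa using hcase)
      rw [← hi, this, huv1]
    · right
      have hlt : (⟨1, hn1⟩ : Fin n) < i := by
        simp only [Fin.lt_def]
        omega
      have := (hvchain _ _ hlt).1
      rw [hi] at this
      rwa [huv1]
  have hpw : (u ⟨1, hm1⟩ ++ a) <+: w := by
    have : u ⟨1, hm1⟩ ∈ Pa a w := by
      rw [hPu]; exact ⟨⟨1, hm1⟩, rfl⟩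
    exact this
  have hqw : comp bar (u ⟨1, hm1⟩ ++ a) <:+ w := by
    rw [comp_append]
    have hmem : comp bar (v ⟨1, hn1⟩) ∈ Sa bar a w := by
      rw [hSv]; exact ⟨⟨1, hn1⟩, rfl⟩
    have h2 : comp bar a ++ comp bar (v ⟨1, hn1⟩) <:+ w := hmem
    rwa [huv1]
  have hInvw : Inv bar a (u ⟨1, hm1⟩) w := ⟨hp, hpw, hs, hqw, hAw, hBw⟩
  have hz' : Relation.ReflTransGen (HC bar a) w z := hz
  clear hz
  have key : Inv bar a (u ⟨1, hm1⟩) z := by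
    induction hz' with
    | refl => exact hInvw
    | tail hsteps hstep ih =>
        rcases hstep with hR | hL
        · exact rh_inv bar hbar ih hR
        · have k1 := rh_inv bar hbar (inv_comp bar hbar ih) (lh_to_rh bar hbar hL)
          have k2 := inv_comp bar hbar k1
          rwa [comp_comp bar hbar] at k2
  exact ⟨key.2.1, key.2.2.2.1⟩


end Hairpin
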